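/- Let A be a commutative ring with an action of a finite group G, let q ∈ Spec(A^G), and let A(q) = (A ⊗_{A^G} k(q))_red be the reduced fiber. Then A(q) is isomorphic as a ring to the finite product k(p_1) × … × k(p_r) of the residue fields of A at the prime ideals p_1,…,p_r of A lying over q. -/

import Mathlib

open scoped TensorProduct
set_option synthInstance.maxHeartbeats 400000
set_option maxHeartbeats 1000000

/-- The subring `A^G` of `G`-invariant elements of `A`. -/
def fixedSubring (G A : Type*) [Group G] [CommRing A] [MulSemiringAction G A] : Subring A where
  carrier := {a | ∀ g : G, g • a = a}
  zero_mem' := by intro g; simp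
  one_mem' := by intro g; simp
  add_mem' := by intro a b ha hb g; rw [smul_add, ha g, hb g]
  mul_mem' := by intro a b ha hb g; rw [smul_mul', ha g, hb g]
  neg_mem' := by intro a ha g; rw [smul_neg, ha g]

set_option linter.unusedSectionVars false

section Invariants
variable (G A : Type*) [Group G] [CommRing A] [MulSemiringAction G A]

theorem fixedSubring_isIntegral [Finite G] : Algebra.IsIntegral (fixedSubring G A) A := by
  cases nonempty_fintype G
  refine ⟨fun x => ?_⟩
  refine ⟨(prodXSubSMul G A x).toSubring (fixedSubring G A)
      ?_, ?_, ?_⟩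
  · intro c hc; change ∀ g : G, g • c = c; intro g
    obtain ⟨n, _, hn⟩ := Polynomial.mem_coeffs_iff.1 hc
    exact hn.symm ▸ prodXSubSMul.coeff G A x g n
  · exact (Polynomial.monic_toSubring _ _ _).2 (prodXSubSMul.monic G A x)
  · show Polynomial.eval₂ (fixedSubring G A).subtype x _ = 0
    rw [← prodXSubSMul.eval G A x, Polynomial.eval₂_eq_eval_map]
    exact congrArg (Polynomial.eval x) (Polynomial.map_toSubring _ _ _)

variable {G A}

theorem primesOver_finite' [Finite G] (q : Ideal (fixedSubring G A)) [q.IsPrime] :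
    {p : Ideal A | p.IsPrime ∧ p.comap (algebraMap (fixedSubring G A) A) = q}.Finite := by
  cases nonempty_fintype G
  classical
  set S := {p : Ideal A | p.IsPrime ∧ p.comap (algebraMap (fixedSubring G A) A) = q} with hSdef
  rcases Set.eq_empty_or_nonempty S with h | ⟨p₀, hp₀⟩
  · rw [h]; exact Set.finite_empty
  · have := fixedSubring_isIntegral G A
    set J : G → Ideal A := fun g => Ideal.comap (MulSemiringAction.toRingHom G A g) p₀ with hJ
    haveI : p₀.IsPrime := hp₀.1
    haveI hJp : ∀ g, (J g).IsPrime := fun g => Ideal.IsPrime.comap _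
    have hJq : ∀ g, (J g).comap (algebraMap (fixedSubring G A) A) = q := by
      intro g
      rw [← hp₀.2]
      ext r
      show g • (r : A) ∈ p₀ ↔ (r : A) ∈ p₀
      rw [r.2 g]
    apply Set.Finite.subset (Set.finite_range J)
    rintro p ⟨hp, hpq⟩
    have hsub : (p : Set A) ⊆ ⋃ g ∈ ((Finset.univ : Finset G) : Set G), (J g : Set A) := by
      intro a ha
      have hN : (∏ g : G, g • a) ∈ p₀ := by
        have hfix : ∀ g : G, g • (∏ g' : G, g' • a) = ∏ g' : G, g' • a := by
          intro g
          rw [Finset.smul_prod']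
          exact Fintype.prod_equiv (Equiv.mulLeft g) _ _ (fun g' => by
            rw [smul_smul, Equiv.coe_mulLeft])
        have hNp : (∏ g : G, g • a) ∈ p := by
          rw [Ideal.IsPrime.prod_mem_iff]
          exact ⟨1, Finset.mem_univ 1, by rwa [one_smul]⟩
        have : (⟨∏ g : G, g • a, hfix⟩ : fixedSubring G A) ∈ q := by
          rw [← hpq]; exact hNp
        rw [← hp₀.2] at this
        exact this
      rw [Ideal.IsPrime.prod_mem_iff] at hN
      obtain ⟨g, _, hg⟩ := hN
      exact Set.mem_biUnion (Finset.mem_coe.mpr (Finset.mem_univ g)) hg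
    rw [Ideal.subset_union_prime 1 1 (fun g _ _ _ => hJp g)] at hsub
    obtain ⟨g, _, hle⟩ := hsub
    refine ⟨g, ?_⟩
    by_contra hne
    have hlt : p < J g := lt_of_le_of_ne hle (Ne.symm hne)
    obtain ⟨x, hxJ, hxp⟩ := SetLike.exists_of_lt hlt
    have := Ideal.comap_lt_comap_of_integral_mem_sdiff (R := fixedSubring G A) hle
      ⟨hxJ, hxp⟩ (Algebra.IsIntegral.isIntegral x)
    rw [hpq, hJq g] at this
    exact lt_irrefl q this

end Invariants

section Fiber

variable {R A : Type*} [CommRing R] [CommRing A] [Algebra R A]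
  (q : Ideal R) [q.IsPrime]
  (kq : Type*) [Field kq] [Algebra (R ⧸ q) kq] [IsFractionRing (R ⧸ q) kq]
  [Algebra R kq] [IsScalarTower R (R ⧸ q) kq]

/-- The residue-field map `k(q) →+* Frac(A/p)` for a prime `p` over `q`. -/
noncomputable def resHom (p : Ideal A) (hpp : p.IsPrime)
    (hp : p.comap (algebraMap R A) = q) : kq →+* FractionRing (A ⧸ p) :=
  haveI := hpp
  IsFractionRing.lift (g := (algebraMap (A ⧸ p) (FractionRing (A ⧸ p))).comp
      (Ideal.quotientMap p (algebraMap R A) hp.ge))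
    ((IsFractionRing.injective _ _).comp (Ideal.quotientMap_injective' hp.le))

lemma resHom_algebraMap (p : Ideal A) (hpp : p.IsPrime) (hp : p.comap (algebraMap R A) = q)
    (x : R ⧸ q) :
    resHom q kq p hpp hp (algebraMap (R ⧸ q) kq x) =
      algebraMap (A ⧸ p) (FractionRing (A ⧸ p)) (Ideal.quotientMap p (algebraMap R A) hp.ge x) :=
  haveI := hpp
  IsFractionRing.lift_algebraMap _ _

lemma resHom_algebraMap' (p : Ideal A) (hpp : p.IsPrime) (hp : p.comap (algebraMap R A) = q)
    (x : R) :
    resHom q kq p hpp hp (algebraMap R kq x) = algebraMap R (FractionRing (A ⧸ p)) x := by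
  haveI := hpp
  rw [IsScalarTower.algebraMap_apply R (R ⧸ q) kq x, resHom_algebraMap,
    IsScalarTower.algebraMap_apply R (A ⧸ p) (FractionRing (A ⧸ p)) x]
  rfl

/-- The canonical map `k(q) ⊗[R] A →+* Frac(A/p)`. -/
noncomputable def fiberHom (p : Ideal A) (hpp : p.IsPrime)
    (hp : p.comap (algebraMap R A) = q) : (kq ⊗[R] A) →+* FractionRing (A ⧸ p) :=
  haveI := hpp
  letI : Algebra kq (FractionRing (A ⧸ p)) := (resHom q kq p hpp hp).toAlgebra
  haveI : IsScalarTower R kq (FractionRing (A ⧸ p)) :=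
    IsScalarTower.of_algebraMap_eq (fun x => (resHom_algebraMap' q kq p hpp hp x).symm)
  (Algebra.TensorProduct.lift (Algebra.ofId kq (FractionRing (A ⧸ p)))
    { toRingHom := (algebraMap (A ⧸ p) (FractionRing (A ⧸ p))).comp (Ideal.Quotient.mk p)
      commutes' := by
        intro r
        show algebraMap (A ⧸ p) (FractionRing (A ⧸ p)) (Ideal.Quotient.mk p (algebraMap R A r)) =
          algebraMap R (FractionRing (A ⧸ p)) r
        rw [IsScalarTower.algebraMap_apply R (A ⧸ p) (FractionRing (A ⧸ p)) r]
        rfl }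
    (fun x y => Commute.all _ _)).toRingHom

lemma fiberHom_tmul (p : Ideal A) (hpp : p.IsPrime) (hp : p.comap (algebraMap R A) = q)
    (c : kq) (a : A) :
    fiberHom q kq p hpp hp (c ⊗ₜ[R] a) =
      resHom q kq p hpp hp c *
        algebraMap (A ⧸ p) (FractionRing (A ⧸ p)) (Ideal.Quotient.mk p a) := by
  haveI := hpp
  letI : Algebra kq (FractionRing (A ⧸ p)) := (resHom q kq p hpp hp).toAlgebra
  haveI : IsScalarTower R kq (FractionRing (A ⧸ p)) :=
    IsScalarTower.of_algebraMap_eq (fun x => (resHom_algebraMap' q kq p hpp hp x).symm)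
  simp only [fiberHom]
  exact Algebra.TensorProduct.lift_tmul _ _ _ c a

lemma fiberHom_tmul_one (p : Ideal A) (hpp : p.IsPrime) (hp : p.comap (algebraMap R A) = q)
    (a : A) :
    fiberHom q kq p hpp hp ((1 : kq) ⊗ₜ[R] a) =
      algebraMap (A ⧸ p) (FractionRing (A ⧸ p)) (Ideal.Quotient.mk p a) := by
  rw [fiberHom_tmul, map_one, one_mul]

lemma fiberHom_tmul_one_eq_zero_iff (p : Ideal A) (hpp : p.IsPrime)
    (hp : p.comap (algebraMap R A) = q) (a : A) :
    fiberHom q kq p hpp hp ((1 : kq) ⊗ₜ[R] a) = 0 ↔ a ∈ p := by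
  haveI := hpp
  rw [fiberHom_tmul_one, map_eq_zero_iff _ (IsFractionRing.injective (A ⧸ p) _),
    Ideal.Quotient.eq_zero_iff_mem]

lemma tensor_isIntegral [Algebra.IsIntegral R A] : Algebra.IsIntegral kq (kq ⊗[R] A) := by
  refine ⟨fun z => ?_⟩
  induction z using TensorProduct.induction_on with
  | zero => exact isIntegral_zero
  | tmul c a => exact IsIntegral.tmul c (Algebra.IsIntegral.isIntegral a)
  | add x y hx hy => exact hx.add hy

lemma fiberHom_surjective [Algebra.IsIntegral R A] (p : Ideal A) (hpp : p.IsPrime)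
    (hp : p.comap (algebraMap R A) = q) :
    Function.Surjective (fiberHom q kq p hpp hp) := by
  haveI := hpp
  letI : Algebra kq (FractionRing (A ⧸ p)) := (resHom q kq p hpp hp).toAlgebra
  haveI : IsScalarTower R kq (FractionRing (A ⧸ p)) :=
    IsScalarTower.of_algebraMap_eq (fun x => (resHom_algebraMap' q kq p hpp hp x).symm)
  set Ψ : (kq ⊗[R] A) →ₐ[kq] FractionRing (A ⧸ p) :=
    Algebra.TensorProduct.lift (Algebra.ofId kq (FractionRing (A ⧸ p)))
      { toRingHom := (algebraMap (A ⧸ p) (FractionRing (A ⧸ p))).comp (Ideal.Quotient.mk p)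
        commutes' := by
          intro r
          show algebraMap (A ⧸ p) (FractionRing (A ⧸ p))
              (Ideal.Quotient.mk p (algebraMap R A r)) =
            algebraMap R (FractionRing (A ⧸ p)) r
          rw [IsScalarTower.algebraMap_apply R (A ⧸ p) (FractionRing (A ⧸ p)) r]
          rfl }
      (fun x y => Commute.all _ _) with hΨ
  have heq : ⇑(fiberHom q kq p hpp hp) = ⇑Ψ := rfl
  rw [heq]
  -- the range of `Ψ` is a field containing `A ⧸ p`, hence all of `Frac (A ⧸ p)`
  haveI : Algebra.IsIntegral kq (kq ⊗[R] A) := tensor_isIntegral (R := R) (A := A) kq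
  haveI : Algebra.IsIntegral kq Ψ.range := by
    refine ⟨fun x => ?_⟩
    obtain ⟨b, rfl⟩ := Ψ.rangeRestrict_surjective x
    exact (Algebra.IsIntegral.isIntegral b).map Ψ.rangeRestrict
  have hinj : Function.Injective (algebraMap kq Ψ.range) :=
    RingHom.injective (algebraMap kq Ψ.range)
  have hfield : IsField Ψ.range :=
    (Algebra.IsIntegral.isField_iff_isField hinj).mp (Field.toIsField kq)
  have hmem : ∀ x : A ⧸ p, algebraMap (A ⧸ p) (FractionRing (A ⧸ p)) x ∈ Ψ.range := by
    intro x
    obtain ⟨a, rfl⟩ := Ideal.Quotient.mk_surjective x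
    exact ⟨(1 : kq) ⊗ₜ[R] a, fiberHom_tmul_one q kq p hpp hp a⟩
  intro z
  obtain ⟨x, y, hy, hxy⟩ := IsFractionRing.div_surjective (A := A ⧸ p) z
  have hy0 : algebraMap (A ⧸ p) (FractionRing (A ⧸ p)) y ≠ 0 := by
    rw [map_ne_zero_iff _ (IsFractionRing.injective (A ⧸ p) _)]
    exact nonZeroDivisors.ne_zero hy
  obtain ⟨u, hu⟩ := hfield.mul_inv_cancel (a := ⟨_, hmem y⟩)
    (by simpa [Subtype.ext_iff] using hy0)
  have hz : z = algebraMap (A ⧸ p) (FractionRing (A ⧸ p)) x * (u : FractionRing (A ⧸ p)) := by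
    have hu' : algebraMap (A ⧸ p) (FractionRing (A ⧸ p)) y * (u : FractionRing (A ⧸ p)) = 1 :=
      congrArg Subtype.val hu
    have hu'' : (algebraMap (A ⧸ p) (FractionRing (A ⧸ p)) y)⁻¹ =
        (u : FractionRing (A ⧸ p)) := inv_eq_of_mul_eq_one_right hu'
    rw [← hxy, div_eq_mul_inv, hu'']
  have hzmem : z ∈ Ψ.range := by rw [hz]; exact mul_mem (hmem x) u.2
  exact hzmem

lemma prime_eq_ker (P : Ideal (kq ⊗[R] A)) (hP : P.IsPrime) :
    ∃ (p : Ideal A) (h1 : p.IsPrime) (h2 : p.comap (algebraMap R A) = q),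
      P = RingHom.ker (fiberHom q kq p h1 h2) := by
  haveI := hP
  set π : (kq ⊗[R] A) →+* (kq ⊗[R] A) ⧸ P := Ideal.Quotient.mk P with hπ
  set φ : A →+* (kq ⊗[R] A) ⧸ P :=
    π.comp (Algebra.TensorProduct.includeRight (R := R) (A := kq) (B := A)).toRingHom with hφ
  have h1 : (RingHom.ker φ).IsPrime := RingHom.ker_isPrime φ
  set ι : kq →+* (kq ⊗[R] A) :=
    (Algebra.TensorProduct.includeLeft (R := R) (S := R) (A := kq) (B := A)).toRingHom with hι
  have h2 : (RingHom.ker φ).comap (algebraMap R A) = q := by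
    ext r
    have key : φ (algebraMap R A r) = π (ι (algebraMap R kq r)) := by
      show π ((Algebra.TensorProduct.includeRight (R := R) (A := kq) (B := A))
          (algebraMap R A r)) = _
      rw [AlgHom.commutes]
      show _ = π ((Algebra.TensorProduct.includeLeft (R := R) (S := R) (A := kq) (B := A))
          (algebraMap R kq r))
      rw [AlgHom.commutes]
    show φ (algebraMap R A r) = 0 ↔ r ∈ q
    rw [key]
    show (π.comp ι) (algebraMap R kq r) = 0 ↔ r ∈ q
    rw [map_eq_zero_iff (π.comp ι) ((π.comp ι).injective),
      IsScalarTower.algebraMap_apply R (R ⧸ q) kq r,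
      map_eq_zero_iff _ (IsFractionRing.injective (R ⧸ q) kq),
      Ideal.Quotient.algebraMap_eq, Ideal.Quotient.eq_zero_iff_mem]
  refine ⟨RingHom.ker φ, h1, h2, ?_⟩
  haveI := h1
  set j : (A ⧸ RingHom.ker φ) →+* (kq ⊗[R] A) ⧸ P := RingHom.kerLift φ with hj
  have hjinj : Function.Injective j := RingHom.kerLift_injective φ
  set L := FractionRing ((kq ⊗[R] A) ⧸ P) with hL
  set toL : ((kq ⊗[R] A) ⧸ P) →+* L := algebraMap _ L with htoL
  have htoLinj : Function.Injective toL := IsFractionRing.injective _ _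
  have hg'inj : Function.Injective (toL.comp j) := htoLinj.comp hjinj
  set θ : FractionRing (A ⧸ RingHom.ker φ) →+* L := IsFractionRing.lift hg'inj with hθdef
  have hθinj : Function.Injective θ := θ.injective
  have hkq : θ.comp (resHom q kq (RingHom.ker φ) h1 h2) = (toL.comp π).comp ι := by
    apply IsLocalization.ringHom_ext (nonZeroDivisors (R ⧸ q)) (S := kq)
    apply RingHom.ext
    intro x
    obtain ⟨r, rfl⟩ := Ideal.Quotient.mk_surjective x
    show θ (resHom q kq (RingHom.ker φ) h1 h2 (algebraMap (R ⧸ q) kq (Ideal.Quotient.mk q r))) =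
      toL (π (ι (algebraMap (R ⧸ q) kq (Ideal.Quotient.mk q r))))
    rw [resHom_algebraMap]
    rw [hθdef]
    rw [IsFractionRing.lift_algebraMap]
    have hstep : ι (algebraMap (R ⧸ q) kq (Ideal.Quotient.mk q r)) =
        (Algebra.TensorProduct.includeRight (R := R) (A := kq) (B := A)) (algebraMap R A r) := by
      show (Algebra.TensorProduct.includeLeft (R := R) (S := R) (A := kq) (B := A))
          (algebraMap (R ⧸ q) kq (Ideal.Quotient.mk q r)) = _
      rw [← Ideal.Quotient.algebraMap_eq, ← IsScalarTower.algebraMap_apply R (R ⧸ q) kq r,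
        AlgHom.commutes, AlgHom.commutes]
    rw [hstep]
    show toL (j (Ideal.quotientMap (RingHom.ker φ) (algebraMap R A) h2.ge
        (Ideal.Quotient.mk q r))) = _
    rw [Ideal.quotientMap_mk, RingHom.kerLift_mk]
    rfl
  have hcomp : θ.comp (fiberHom q kq (RingHom.ker φ) h1 h2) = toL.comp π := by
    apply RingHom.ext
    intro x
    induction x using TensorProduct.induction_on with
    | zero => simp only [map_zero]
    | add x y hx hy =>
        simp only [RingHom.comp_apply] at hx hy ⊢
        rw [map_add, map_add, map_add, map_add, hx, hy]
    | tmul c a =>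
        have hsplit : (c ⊗ₜ[R] a : kq ⊗[R] A) = (c ⊗ₜ[R] (1 : A)) * ((1 : kq) ⊗ₜ[R] a) := by
          rw [Algebra.TensorProduct.tmul_mul_tmul, mul_one, one_mul]
        simp only [RingHom.comp_apply]
        rw [hsplit, map_mul, map_mul, map_mul, map_mul]
        congr 1
        · have hc : fiberHom q kq (RingHom.ker φ) h1 h2 (c ⊗ₜ[R] (1 : A)) =
              resHom q kq (RingHom.ker φ) h1 h2 c := by
            rw [fiberHom_tmul, map_one, map_one, mul_one]
          rw [hc]
          exact RingHom.congr_fun hkq c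
        · rw [fiberHom_tmul_one, hθdef, IsFractionRing.lift_algebraMap]
          show toL (j (Ideal.Quotient.mk _ a)) = _
          rw [RingHom.kerLift_mk]
          rfl
  have e1 : RingHom.ker (θ.comp (fiberHom q kq (RingHom.ker φ) h1 h2)) =
      RingHom.ker (fiberHom q kq (RingHom.ker φ) h1 h2) := by
    ext x
    simp only [RingHom.mem_ker, RingHom.comp_apply]
    exact map_eq_zero_iff θ hθinj
  have e2 : RingHom.ker (toL.comp π) = RingHom.ker π := by
    ext x
    simp only [RingHom.mem_ker, RingHom.comp_apply]
    exact map_eq_zero_iff toL htoLinj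
  have e3 : RingHom.ker π = P := Ideal.mk_ker
  rw [← e1, hcomp, e2, e3]

lemma map_nilradical_ringEquiv {B C : Type*} [CommRing B] [CommRing C] (f : B ≃+* C) :
    Ideal.map (f : B →+* C) (nilradical B) = nilradical C := by
  apply le_antisymm
  · rw [Ideal.map_le_iff_le_comap]
    intro x hx
    rw [mem_nilradical] at hx
    exact Ideal.mem_comap.mpr (mem_nilradical.mpr (hx.map (f : B →+* C)))
  · intro x hx
    rw [mem_nilradical] at hx
    have : x = f (f.symm x) := (f.apply_symm_apply x).symm
    rw [this]
    exact Ideal.mem_map_of_mem _ (mem_nilradical.mpr (hx.map (f.symm : C →+* B)))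

theorem fiber_lemma [Algebra.IsIntegral R A]
    (hfin : {p : Ideal A | p.IsPrime ∧ p.comap (algebraMap R A) = q}.Finite) :
    ∃ (r : ℕ) (ps : Fin r → Ideal A),
      Function.Injective ps ∧
      (∀ i, (ps i).IsPrime) ∧
      (∀ i, (ps i).comap (algebraMap R A) = q) ∧
      (∀ p : Ideal A, p.IsPrime → p.comap (algebraMap R A) = q → ∃ i, p = ps i) ∧
      Nonempty ((TensorProduct R A kq ⧸ nilradical (TensorProduct R A kq)) ≃+*
        ∀ i, FractionRing (A ⧸ ps i)) := by
  classical
  haveI := hfin.fintype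
  set S := {p : Ideal A | p.IsPrime ∧ p.comap (algebraMap R A) = q} with hS
  set e : Fin (Fintype.card S) ≃ S := (Fintype.equivFin S).symm with he
  set K : S → Ideal (kq ⊗[R] A) :=
    fun s => RingHom.ker (fiberHom q kq (s : Ideal A) s.2.1 s.2.2) with hK
  have hkerprime : ∀ s : S, (K s).IsPrime := by
    intro s
    haveI := s.2.1
    exact RingHom.ker_isPrime _
  have hsurjK : ∀ s : S, Function.Surjective (fiberHom q kq (s : Ideal A) s.2.1 s.2.2) :=
    fun s => fiberHom_surjective q kq _ _ _
  have hmax : ∀ s : S, (K s).IsMaximal := by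
    intro s
    haveI := s.2.1
    refine Ideal.Quotient.maximal_of_isField _ ?_
    exact MulEquiv.isField (Field.toIsField (FractionRing (A ⧸ (s : Ideal A))))
      (RingHom.quotientKerEquivOfSurjective (hsurjK s)).toMulEquiv
  have hKinj : Function.Injective K := by
    intro s t h
    apply Subtype.ext
    ext a
    rw [← fiberHom_tmul_one_eq_zero_iff q kq (s : Ideal A) s.2.1 s.2.2 a,
      ← fiberHom_tmul_one_eq_zero_iff q kq (t : Ideal A) t.2.1 t.2.2 a,
      ← RingHom.mem_ker, ← RingHom.mem_ker]
    show (1 : kq) ⊗ₜ[R] a ∈ K s ↔ (1 : kq) ⊗ₜ[R] a ∈ K t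
    rw [h]
  have hprimes : {P : Ideal (kq ⊗[R] A) | P.IsPrime} = Set.range (fun i => K (e i)) := by
    ext P
    constructor
    · intro hP
      obtain ⟨p, h1, h2, hPk⟩ := prime_eq_ker q kq P hP
      refine ⟨e.symm ⟨p, h1, h2⟩, ?_⟩
      show K (e (e.symm ⟨p, h1, h2⟩)) = P
      rw [Equiv.apply_symm_apply]
      exact hPk.symm
    · rintro ⟨i, rfl⟩
      exact hkerprime (e i)
  have hnil : nilradical (kq ⊗[R] A) = ⨅ i, K (e i) := by
    rw [nilradical_eq_sInf, hprimes, sInf_range]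
  have hcop : Pairwise (Function.onFun IsCoprime fun i => K (e i)) := by
    intro i j hij
    rw [Function.onFun, Ideal.isCoprime_iff_sup_eq]
    refine Ideal.IsMaximal.coprime_of_ne (hmax (e i)) (hmax (e j)) ?_
    intro hKeq
    exact hij (e.injective (hKinj hKeq))
  refine ⟨Fintype.card S, fun i => ((e i : S) : Ideal A),
    fun i j h => e.injective (Subtype.ext h),
    fun i => (e i).2.1, fun i => (e i).2.2,
    fun p hp hpq => ⟨e.symm ⟨p, hp, hpq⟩, by
      show p = ((e (e.symm ⟨p, hp, hpq⟩) : S) : Ideal A)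
      rw [Equiv.apply_symm_apply]⟩, ?_⟩
  refine ⟨RingEquiv.trans (Ideal.quotientEquiv _ _
      (Algebra.TensorProduct.comm R A kq).toRingEquiv
      (map_nilradical_ringEquiv _).symm) (RingEquiv.trans (Ideal.quotEquivOfEq hnil)
      (RingEquiv.trans (Ideal.quotientInfRingEquivPiQuotient (fun i => K (e i)) hcop)
      (RingEquiv.piCongrRight
        (fun i => RingHom.quotientKerEquivOfSurjective (hsurjK (e i))))))⟩

end Fiber

/-- Let a finite group `G` act on a commutative ring `A`, let
`q ∈ Spec (A^G)`, let `k(q)` be the residue field of `A^G` at `q` (the fraction field of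
`A^G/q`), and let `A(q) = (A ⊗_{A^G} k(q))_red` be the reduced fiber.  Then `A(q)` is
isomorphic, as a ring, to the finite product `k(p₁) × … × k(p_r)` of the residue fields of
`A` at the prime ideals `p₁, …, p_r` of `A` lying over `q`. -/
theorem reduced_fiber_iso_prod_residue_fields (G A : Type*) [Group G] [Finite G] [CommRing A]
    [MulSemiringAction G A] (q : Ideal (fixedSubring G A)) [q.IsPrime]
    (kq : Type*) [Field kq] [Algebra ((fixedSubring G A) ⧸ q) kq]
    [IsFractionRing ((fixedSubring G A) ⧸ q) kq] :
    letI : Algebra (fixedSubring G A) kq :=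
      ((algebraMap ((fixedSubring G A) ⧸ q) kq).comp (Ideal.Quotient.mk q)).toAlgebra
    ∃ (r : ℕ) (ps : Fin r → Ideal A),
      Function.Injective ps ∧
      (∀ i, (ps i).IsPrime) ∧
      (∀ i, (ps i).comap (fixedSubring G A).subtype = q) ∧
      (∀ p : Ideal A, p.IsPrime → p.comap (fixedSubring G A).subtype = q → ∃ i, p = ps i) ∧
      Nonempty
        ((TensorProduct (fixedSubring G A) A kq ⧸
            nilradical (TensorProduct (fixedSubring G A) A kq)) ≃+*
          ∀ i, FractionRing (A ⧸ ps i)) := by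
  haveI := fixedSubring_isIntegral G A
  letI : Algebra (fixedSubring G A) kq :=
    ((algebraMap ((fixedSubring G A) ⧸ q) kq).comp (Ideal.Quotient.mk q)).toAlgebra
  haveI : IsScalarTower (fixedSubring G A) ((fixedSubring G A) ⧸ q) kq := by
    refine ⟨fun x y z => ?_⟩
    obtain ⟨r, rfl⟩ := Ideal.Quotient.mk_surjective y
    have hxy : x • (Ideal.Quotient.mk q r) = Ideal.Quotient.mk q (x * r) := rfl
    rw [hxy, Algebra.smul_def, Algebra.smul_def, Algebra.smul_def,
      show Ideal.Quotient.mk q (x * r) = Ideal.Quotient.mk q x * Ideal.Quotient.mk q r from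
        map_mul _ x r, map_mul,
      show algebraMap ((fixedSubring G A) ⧸ q) kq (Ideal.Quotient.mk q x) =
        algebraMap (fixedSubring G A) kq x from rfl, mul_assoc]
  have hfin := primesOver_finite' (G := G) (A := A) q
  obtain ⟨r, ps, h1, h2, h3, h4, h5⟩ := fiber_lemma q kq hfin
  exact ⟨r, ps, h1, h2, h3, h4, h5⟩
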